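/- arXiv:1405.3097 — 5 statements merged into one kernel-verified Lean document; each statement's English description precedes it below -/
import Mathlib

section
/- There exists a ±1 sequence of length 1160 with discrepancy at most 2; that is, there is a function x : {1,…,1160} → {−1,+1} such that for all positive integers d and k with k·d ≤ 1160 one has |∑_{i=1}^{k} x(i·d)| ≤ 2. -/
set_option maxHeartbeats 4000000

def edpN : ℕ := 4504961097154825556269816741855888465623210343355151290943716603978351528177677941921575569145410064050348292847408667914112196206429627915851359507523008980453561767482806110725132488187895523446184796731734441618765218045202062586367838247296359929913629224050167431801393004487186973127093482254979913019648076100184780782545350812752650818736745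

def edpX (i : ℕ) : ℤ := if edpN >>> (i-1) % 2 = 1 then 1 else -1

def chkAux (d m : ℕ) : ℕ → ℕ → Bool
  | _, 0 => true
  | t, r+1 =>
    match t, decide (edpX ((m-r)*d) = 1) with
    | 0, true => chkAux d m 1 r
    | 1, true => chkAux d m 2 r
    | 2, true => chkAux d m 3 r
    | 3, true => chkAux d m 4 r
    | 1, false => chkAux d m 0 r
    | 2, false => chkAux d m 1 r
    | 3, false => chkAux d m 2 r
    | 4, false => chkAux d m 3 r
    | _, _ => false

def chkAll : ℕ → Bool
  | 0 => true
  | d+1 => chkAux (d+1) (1160/(d+1)) 2 (1160/(d+1)) && chkAll d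

lemma edpX_pm (i : ℕ) : edpX i = 1 ∨ edpX i = -1 := by
  unfold edpX; split <;> simp

lemma chkAux_sound (d : ℕ) (hd : 0 < d) (m : ℕ) :
    ∀ r, r ≤ m → ∀ t : ℕ, t ≤ 4 → ((t:ℤ) - 2 = ∑ i ∈ Finset.Icc 1 (m-r), edpX (i*d)) →
    chkAux d m t r = true →
    ∀ u, m - r < u → u ≤ m → |∑ i ∈ Finset.Icc 1 u, edpX (i*d)| ≤ 2 := by
  intro r
  induction r with
  | zero => intro _ t _ _ _ u hu1 hu2; omega
  | succ r ih =>
    intro hrm t ht hsum hchk u hu1 hu2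
    set k := m - (r+1) with hk
    have hmr : m - r = k + 1 := by omega
    have hstep : ∑ i ∈ Finset.Icc 1 (k+1), edpX (i*d)
        = (∑ i ∈ Finset.Icc 1 k, edpX (i*d)) + edpX ((k+1)*d) := by
      rw [Finset.sum_Icc_succ_top (by omega)]
    have key : ∃ t' : ℕ, t' ≤ 4 ∧ ((t':ℤ) - 2 = ∑ i ∈ Finset.Icc 1 (k+1), edpX (i*d)) ∧
        chkAux d m t' r = true := by
      rcases edpX_pm ((k+1)*d) with h1 | h1 <;> interval_cases t <;>
        simp [chkAux, hmr, h1] at hchk <;>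
        exact ⟨_, by norm_num, by rw [hstep, ← hsum, h1]; norm_num, hchk⟩
    obtain ⟨t', ht', hsum', hchk'⟩ := key
    rcases eq_or_lt_of_le (show k + 1 ≤ u by omega) with h2 | h2
    · rw [← h2, ← hsum']
      have : (0:ℤ) ≤ t' := Int.ofNat_nonneg t'
      have : (t':ℤ) ≤ 4 := by exact_mod_cast ht'
      rw [abs_le]; constructor <;> linarith [Int.ofNat_nonneg t']
    · have := ih (by omega) t' ht' (by rw [hmr]; exact hsum') hchk' u (by omega) hu2
      exact this

lemma chkAll_sound : ∀ D, chkAll D = true → ∀ d, 0 < d → d ≤ D →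
    chkAux d (1160/d) 2 (1160/d) = true := by
  intro D
  induction D with
  | zero => intro _ d _ hd; omega
  | succ D ih =>
    intro h d hd1 hd2
    rw [chkAll] at h
    simp only [Bool.and_eq_true] at h
    rcases eq_or_lt_of_le hd2 with h2 | h2
    · rw [h2]; exact h.1
    · exact ih h.2 d hd1 (by omega)

set_option maxRecDepth 100000 in
lemma chkAll_true : chkAll 1160 = true := by decide

/-- There exists a ±1 sequence of length 1160 with discrepancy at most 2. -/
theorem edp_sat_1160 :
    ∃ x : ℕ → ℤ, (∀ i, 1 ≤ i → i ≤ 1160 → x i = 1 ∨ x i = -1) ∧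
      ∀ d k : ℕ, 0 < d → 0 < k → k * d ≤ 1160 →
        |∑ i ∈ Finset.Icc 1 k, x (i * d)| ≤ 2 := by
  refine ⟨edpX, fun i _ _ => edpX_pm i, ?_⟩
  intro d k hd hk hkd
  have hd' : d ≤ 1160 := le_trans (by nlinarith) hkd
  have hc := chkAll_sound 1160 chkAll_true d hd hd'
  have hkm : k ≤ 1160 / d := (Nat.le_div_iff_mul_le hd).2 hkd
  have := chkAux_sound d hd (1160/d) (1160/d) le_rfl 2 (by norm_num)
    (by simp) hc k (by omega) hkm
  exact this
end

section
/- There exists a unique completely multiplicative ±1 sequence of length 9 with discrepancy at most 1, namely (+1, −1, −1, +1, −1, +1, +1, −1, +1); that is, if x : {1,…,9} → {−1,+1} is completely multiplicative and |∑_{i=1}^{k} x(i·d)| ≤ 1 for all positive integers d, k with k·d ≤ 9, then x(1) = +1, x(2) = −1, x(3) = −1, x(4) = +1, x(5) = −1, x(6) = +1, x(7) = +1, x(8) = −1, x(9) = +1, and this sequence indeed has discrepancy at most 1. -/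
private def lam9 : ℕ → ℤ := fun n => ([1,1,-1,-1,1,-1,1,1,-1,1] : List ℤ).getD n 1

private lemma lam9_range : ∀ i, 1 ≤ i → i ≤ 9 → lam9 i = 1 ∨ lam9 i = -1 := by
  intro i h1 h2
  interval_cases i <;> decide

private lemma lam9_mult : ∀ m k : ℕ, 0 < m → 0 < k → m * k ≤ 9 →
    lam9 (m * k) = lam9 m * lam9 k := by
  intro m k hm hk hle
  have hm9 : m ≤ 9 := by nlinarith
  have hk9 : k ≤ 9 := by nlinarith
  interval_cases m <;> interval_cases k <;> first | omega | decide

private lemma lam9_disc : ∀ d k : ℕ, 0 < d → 0 < k → k * d ≤ 9 →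
    |∑ i ∈ Finset.Icc 1 k, lam9 (i * d)| ≤ 1 := by
  intro d k hd hk hle
  have hd9 : d ≤ 9 := by nlinarith
  have hk9 : k ≤ 9 := by nlinarith
  interval_cases d <;> interval_cases k <;> first | omega | decide

/-- There exists a unique completely multiplicative ±1 sequence of length 9
with discrepancy at most 1, namely (+1,−1,−1,+1,−1,+1,+1,−1,+1). -/
theorem cmult_unique_9 :
    (∀ x : ℕ → ℤ,
      (∀ i, 1 ≤ i → i ≤ 9 → x i = 1 ∨ x i = -1) →
      (∀ m k : ℕ, 0 < m → 0 < k → m * k ≤ 9 → x (m * k) = x m * x k) →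
      (∀ d k : ℕ, 0 < d → 0 < k → k * d ≤ 9 →
        |∑ i ∈ Finset.Icc 1 k, x (i * d)| ≤ 1) →
      (x 1 = 1 ∧ x 2 = -1 ∧ x 3 = -1 ∧ x 4 = 1 ∧ x 5 = -1 ∧
        x 6 = 1 ∧ x 7 = 1 ∧ x 8 = -1 ∧ x 9 = 1)) ∧
    (∃ x : ℕ → ℤ,
      (∀ i, 1 ≤ i → i ≤ 9 → x i = 1 ∨ x i = -1) ∧
      (∀ m k : ℕ, 0 < m → 0 < k → m * k ≤ 9 → x (m * k) = x m * x k) ∧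
      (∀ d k : ℕ, 0 < d → 0 < k → k * d ≤ 9 →
        |∑ i ∈ Finset.Icc 1 k, x (i * d)| ≤ 1) ∧
      x 1 = 1 ∧ x 2 = -1 ∧ x 3 = -1 ∧ x 4 = 1 ∧ x 5 = -1 ∧
        x 6 = 1 ∧ x 7 = 1 ∧ x 8 = -1 ∧ x 9 = 1) := by
  constructor
  · intro x hr hm hd
    -- x 1 = 1
    have h11 : x 1 = x 1 * x 1 := by have := hm 1 1 (by norm_num) (by norm_num) (by norm_num); simpa using this
    have h1 : x 1 = 1 := by rcases hr 1 (by norm_num) (by norm_num) with h | h <;> [exact h; (rw [h] at h11; norm_num at h11)]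
    have h4 : x 4 = x 2 * x 2 := by have := hm 2 2 (by norm_num) (by norm_num) (by norm_num); simpa using this
    have h6 : x 6 = x 2 * x 3 := by have := hm 2 3 (by norm_num) (by norm_num) (by norm_num); simpa using this
    have h8 : x 8 = x 2 * x 4 := by have := hm 2 4 (by norm_num) (by norm_num) (by norm_num); simpa using this
    have h9 : x 9 = x 3 * x 3 := by have := hm 3 3 (by norm_num) (by norm_num) (by norm_num); simpa using this
    have s2 := hd 1 2 (by norm_num) (by norm_num) (by norm_num)
    have s4 := hd 1 4 (by norm_num) (by norm_num) (by norm_num)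
    have s6 := hd 1 6 (by norm_num) (by norm_num) (by norm_num)
    have s8 := hd 1 8 (by norm_num) (by norm_num) (by norm_num)
    simp [Finset.sum_Icc_succ_top, abs_le] at s2 s4 s6 s8
    rcases hr 2 (by norm_num) (by norm_num) with h2 | h2 <;>
    rcases hr 3 (by norm_num) (by norm_num) with h3 | h3 <;>
    rcases hr 5 (by norm_num) (by norm_num) with h5 | h5 <;>
    rcases hr 7 (by norm_num) (by norm_num) with h7 | h7 <;>
      simp [h1, h2, h3, h5, h7] at h4 h6 h8 h9 s2 s4 s6 s8 ⊢ <;> omega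
  · exact ⟨lam9, lam9_range, lam9_mult, lam9_disc, by decide, by decide, by decide, by decide,
      by decide, by decide, by decide, by decide, by decide⟩
end

section
/- A ±1 sequence x of length n is completely multiplicative if, and only if, x(1) = +1 and for every composite m ≤ n there exist non-trivial divisors i and j of m (i.e., 1 < i < m, 1 < j < m) with i·j = m such that x(m) = x(i)·x(j). -/
/-- A ±1 sequence of length n is completely multiplicative iff x(1) = +1 and
every composite m ≤ n satisfies x(m) = x(i)·x(j) for some non-trivial
divisors i, j of m with i·j = m. -/
theorem cmult_characterisation (n : ℕ) (hn : 1 ≤ n) (x : ℕ → ℤ)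
    (hx : ∀ i, 1 ≤ i → i ≤ n → x i = 1 ∨ x i = -1) :
    (∀ m k : ℕ, 0 < m → 0 < k → m * k ≤ n → x (m * k) = x m * x k) ↔
    (x 1 = 1 ∧ ∀ m : ℕ, m ≤ n → 1 < m → ¬ m.Prime →
      ∃ i j : ℕ, 1 < i ∧ i < m ∧ 1 < j ∧ j < m ∧ i * j = m ∧
        x m = x i * x j) := by
  constructor
  · intro h
    constructor
    · have h11 := h 1 1 one_pos one_pos (by simpa)
      rcases hx 1 le_rfl hn with h1 | h1 <;> simp [h1] at h11 ⊢ <;> linarith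
    · intro m hmn hm1 hp
      obtain ⟨i, hdvd, hi2, him⟩ := Nat.exists_dvd_of_not_prime2 hm1 hp
      obtain ⟨j, hij⟩ := hdvd
      have hj1 : 1 < j := by
        rcases Nat.lt_or_ge j 2 with hj | hj
        · interval_cases j <;> omega
        · omega
      have hjm : j < m := by nlinarith
      exact ⟨i, j, hi2, him, hj1, hjm, hij.symm,
        by rw [hij]; exact h i j (by omega) (by omega) (hij ▸ hmn)⟩
  · rintro ⟨h1, hc⟩
    have key : ∀ m, 0 < m → m ≤ n → x m = (m.primeFactorsList.map x).prod := by
      intro m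
      induction m using Nat.strong_induction_on with
      | _ m ih =>
        intro hm hmn
        rcases eq_or_lt_of_le (show 1 ≤ m from hm) with h | h
        · rw [← h]; simpa using h1
        · by_cases hp : m.Prime
          · rw [Nat.primeFactorsList_prime hp]; simp
          · obtain ⟨i, j, hi1, him, hj1, hjm, hij, hxm⟩ := hc m hmn h hp
            have hin : i ≤ n := by omega
            have hjn : j ≤ n := by omega
            rw [hxm, ih i him (by omega) hin, ih j hjm (by omega) hjn, ← hij]
            have perm := (Nat.perm_primeFactorsList_mul
              (by omega : i ≠ 0) (by omega : j ≠ 0)).map x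
            rw [perm.prod_eq, List.map_append, List.prod_append]
    intro m k hm hk hmk
    have hmn : m ≤ n := le_trans (Nat.le_mul_of_pos_right m hk) hmk
    have hkn : k ≤ n := le_trans (Nat.le_mul_of_pos_left k hm) hmk
    rw [key (m*k) (by positivity) hmk, key m hm hmn, key k hk hkn]
    have perm := (Nat.perm_primeFactorsList_mul
      (by omega : m ≠ 0) (by omega : k ≠ 0)).map x
    rw [perm.prod_eq, List.map_append, List.prod_append]
end

section
/- Correctness of the sequential counter (Sinz) encoding. Fix n ≥ 1 and a : {1,…,n} → Bool, and suppose s : {0,…,n} × {0,…,n} → Bool satisfies: (1) for all 1 ≤ k ≤ n and 1 ≤ j ≤ n, s(k,j) = true if and only if s(k,j−1) = true or (s(k−1,j−1) = true and a(j) = true); (2) s(k,j) = false for all 0 ≤ j < k ≤ n; (3) s(0,j) = true for all 0 ≤ j ≤ n. Then: (i) for all 1 ≤ j ≤ n and 1 ≤ k ≤ n, s(k,j) = true if and only if the number of indices i with 1 ≤ i ≤ j and a(i) = true is at least k; moreover (ii) for every a : {1,…,n} → Bool such an s exists, and it satisfies: for all r ≤ n and j ≤ n, if the number of indices i ≤ j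 with a(i) = true is at most r, then s(k,j) = false for all r < k ≤ n. -/
lemma sinz_count_succ (a : ℕ → Bool) (j : ℕ) :
    ((Finset.Icc 1 (j+1)).filter fun i => a i = true).card =
    ((Finset.Icc 1 j).filter fun i => a i = true).card
      + (if a (j+1) = true then 1 else 0) := by
  have h : Finset.Icc 1 (j+1) = insert (j+1) (Finset.Icc 1 j) := by
    rw [← Finset.insert_Icc_right_eq_Icc_add_one (by omega)]
  rw [h, Finset.filter_insert]
  split <;> simp [Finset.card_insert_of_notMem, Finset.mem_filter]

lemma sinz_le_count (a : ℕ → Bool) (j k : ℕ) (hk : 1 ≤ k) :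
    (k ≤ ((Finset.Icc 1 (j+1)).filter fun i => a i = true).card) ↔
    (k ≤ ((Finset.Icc 1 j).filter fun i => a i = true).card ∨
      (k - 1 ≤ ((Finset.Icc 1 j).filter fun i => a i = true).card ∧ a (j+1) = true)) := by
  rw [sinz_count_succ]
  rcases Bool.eq_false_or_eq_true (a (j+1)) with h | h <;> simp [h] <;> omega

lemma sinz_unique (n : ℕ) (a : ℕ → Bool) (s : ℕ → ℕ → Bool)
    (h1 : ∀ k j, 1 ≤ k → k ≤ n → 1 ≤ j → j ≤ n →
      (s k j = true ↔
        (s k (j - 1) = true ∨ (s (k - 1) (j - 1) = true ∧ a j = true))))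
    (h2 : ∀ k j, j < k → k ≤ n → s k j = false)
    (h3 : ∀ j, j ≤ n → s 0 j = true) :
    ∀ j, j ≤ n → ∀ k, k ≤ n →
      (s k j = true ↔ k ≤ ((Finset.Icc 1 j).filter fun i => a i = true).card) := by
  intro j
  induction j with
  | zero =>
    intro _ k hk
    rcases Nat.eq_zero_or_pos k with rfl | hk1
    · simp [h3 0 (Nat.zero_le n)]
    · simp [h2 k 0 hk1 hk]
      omega
  | succ j ih =>
    intro hj k hk
    have hj' : j ≤ n := by omega
    rcases Nat.eq_zero_or_pos k with rfl | hk1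
    · simp [h3 (j+1) hj]
    · rw [h1 k (j+1) hk1 hk (by omega) hj]
      simp only [Nat.add_sub_cancel]
      rw [ih hj' k hk, ih hj' (k-1) (by omega), sinz_le_count a j k hk1]

/-- Correctness of the sequential counter (Sinz) encoding: (i) any s
satisfying the sequential counter conditions (1)–(3) computes the partial
counts of a; (ii) such an s always exists, and it assigns false to all
counters exceeding any valid bound r on the partial count. -/
theorem sinz_counter_correct (n : ℕ) (hn : 1 ≤ n) (a : ℕ → Bool) :
    (∀ s : ℕ → ℕ → Bool,
      (∀ k j, 1 ≤ k → k ≤ n → 1 ≤ j → j ≤ n →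
        (s k j = true ↔
          (s k (j - 1) = true ∨ (s (k - 1) (j - 1) = true ∧ a j = true)))) →
      (∀ k j, j < k → k ≤ n → s k j = false) →
      (∀ j, j ≤ n → s 0 j = true) →
      ∀ j k, 1 ≤ j → j ≤ n → 1 ≤ k → k ≤ n →
        (s k j = true ↔
          k ≤ ((Finset.Icc 1 j).filter fun i => a i = true).card)) ∧
    (∃ s : ℕ → ℕ → Bool,
      (∀ k j, 1 ≤ k → k ≤ n → 1 ≤ j → j ≤ n →
        (s k j = true ↔
          (s k (j - 1) = true ∨ (s (k - 1) (j - 1) = true ∧ a j = true)))) ∧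
      (∀ k j, j < k → k ≤ n → s k j = false) ∧
      (∀ j, j ≤ n → s 0 j = true) ∧
      (∀ r j, r ≤ n → j ≤ n →
        ((Finset.Icc 1 j).filter fun i => a i = true).card ≤ r →
        ∀ k, r < k → k ≤ n → s k j = false)) := by
  constructor
  · intro s h1 h2 h3 j k _ hj _ hk
    exact sinz_unique n a s h1 h2 h3 j hj k hk
  · refine ⟨fun k j => decide (k ≤ ((Finset.Icc 1 j).filter fun i => a i = true).card),
      ?_, ?_, ?_, ?_⟩
    · intro k j hk1 _ hj1 _
      obtain ⟨j, rfl⟩ : ∃ m, j = m + 1 := ⟨j - 1, by omega⟩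
      simp only [Nat.add_sub_cancel, decide_eq_true_eq]
      exact sinz_le_count a j k hk1
    · intro k j hjk _
      have : ((Finset.Icc 1 j).filter fun i => a i = true).card ≤ j :=
        le_trans (Finset.card_filter_le _ _) (by simp)
      simp only [decide_eq_false_iff_not]
      omega
    · intro j _; simp
    · intro r j _ _ hcr k hrk _
      simp only [decide_eq_false_iff_not]
      omega
end

section
/- Correctness of the C-bounded encoding. Fix n ≥ 1, an integer C > 0, and a : {1,…,n} → Bool, and let x : {1,…,n} → {−1,+1} be defined by x(i) = +1 if a(i) = true and x(i) = −1 otherwise. Then x is C-bounded (i.e., |∑_{i=1}^{j} x(i)| ≤ C for all 1 ≤ j ≤ n) if, and only if, there exists s : {0,…,n} × {0,…,n} → Bool satisfying: (1) for all 1 ≤ k ≤ n and 1 ≤ j ≤ n, s(k,j) = true if and only if s(k,j−1) = true or (s(k−1,j−1) = true and a(j) = true); (2) s(k,j) = false for all 0 ≤ j < k ≤ n; (3) s(0,j) = true for all 0 ≤ j ≤ n; (4) s(k,j) = true for all 1 ≤ k ≤ n and all j with 2k−2+C < j ≤ n; (5) s(k,j) = false for all 1 ≤ k ≤ n and all j with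 0 ≤ j < 2k−C. -/
/-- Correctness of the C-bounded encoding: the ±1 sequence induced by the
Boolean sequence a is C-bounded iff there is a sequential counter s
satisfying conditions (1)–(3) together with the C-boundedness clauses
(4)–(5). -/
theorem cbounded_encoding_correct (n : ℕ) (hn : 1 ≤ n) (C : ℤ) (hC : 0 < C)
    (a : ℕ → Bool) :
    (∀ j, 1 ≤ j → j ≤ n →
        |∑ i ∈ Finset.Icc 1 j, (if a i then (1 : ℤ) else -1)| ≤ C) ↔
    (∃ s : ℕ → ℕ → Bool,
      (∀ k j, 1 ≤ k → k ≤ n → 1 ≤ j → j ≤ n →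
        (s k j = true ↔
          (s k (j - 1) = true ∨ (s (k - 1) (j - 1) = true ∧ a j = true)))) ∧
      (∀ k j, j < k → k ≤ n → s k j = false) ∧
      (∀ j, j ≤ n → s 0 j = true) ∧
      (∀ k j : ℕ, 1 ≤ k → k ≤ n → 2 * (k : ℤ) - 2 + C < (j : ℤ) → j ≤ n →
        s k j = true) ∧
      (∀ k j : ℕ, 1 ≤ k → k ≤ n → (j : ℤ) < 2 * (k : ℤ) - C → j ≤ n →
        s k j = false)) := by
  classical
  set c : ℕ → ℕ := fun j => ((Finset.Icc 1 j).filter (fun i => a i = true)).card with hc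
  have hc0 : c 0 = 0 := by simp [hc]
  have hcle : ∀ j, c j ≤ j := by
    intro j
    calc c j ≤ (Finset.Icc 1 j).card := Finset.card_filter_le _ _
      _ = j := by simp
  have hcsucc : ∀ j, c (j + 1) = c j + (if a (j + 1) then 1 else 0) := by
    intro j
    simp only [hc]
    rw [show Finset.Icc 1 (j + 1) = insert (j + 1) (Finset.Icc 1 j) by
      ext i; simp [Finset.mem_Icc]; omega]
    rw [Finset.filter_insert]
    split
    · rw [Finset.card_insert_of_notMem (by simp [Finset.mem_Icc])]
    · simp
  have hsum : ∀ j, ∑ i ∈ Finset.Icc 1 j, (if a i then (1 : ℤ) else -1)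
      = 2 * (c j : ℤ) - j := by
    intro j
    induction j with
    | zero => simp [hc0]
    | succ m ih =>
      rw [Finset.sum_Icc_succ_top (by omega), ih, hcsucc]
      split_ifs <;> push_cast <;> ring
  constructor
  · intro hbd
    refine ⟨fun k j => decide (k ≤ c j), ?_, ?_, ?_, ?_, ?_⟩
    · intro k j hk hkn hj hjn
      obtain ⟨m, rfl⟩ : ∃ m, j = m + 1 := ⟨j - 1, by omega⟩
      simp only [Nat.add_sub_cancel, decide_eq_true_eq]
      have := hcsucc m
      cases h : a (m + 1) <;> simp [h] at this ⊢ <;> omega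
    · intro k j hjk hkn
      have := hcle j
      simp only [decide_eq_false_iff_not]
      omega
    · intro j hj; simp
    · intro k j hk hkn hlt hjn
      have hj1 : 1 ≤ j := by omega
      have := hbd j hj1 hjn
      rw [hsum j, abs_le] at this
      simp only [decide_eq_true_eq]
      omega
    · intro k j hk hkn hlt hjn
      simp only [decide_eq_false_iff_not]
      rcases Nat.eq_zero_or_pos j with rfl | hj1
      · omega
      · have := hbd j hj1 hjn
        rw [hsum j, abs_le] at this
        omega
  · rintro ⟨s, h1, h2, h3, h4, h5⟩
    have key : ∀ j, j ≤ n → ∀ k, k ≤ n → (s k j = true ↔ k ≤ c j) := by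
      intro j
      induction j with
      | zero =>
        intro _ k hkn
        rcases Nat.eq_zero_or_pos k with rfl | hk
        · simp [h3 0 (by omega)]
        · simp [h2 k 0 hk hkn, hc0]; omega
      | succ m ih =>
        intro hjn k hkn
        rcases Nat.eq_zero_or_pos k with rfl | hk
        · simp [h3 (m + 1) hjn]
        · rw [h1 k (m + 1) hk hkn (by omega) hjn]
          simp only [Nat.add_sub_cancel]
          rw [ih (by omega) k hkn, ih (by omega) (k - 1) (by omega)]
          have := hcsucc m
          cases h : a (m + 1) <;> simp [h] at this ⊢ <;> omega
    intro j hj1 hjn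
    rw [hsum j, abs_le]
    constructor
    · by_contra hcon
      push_neg at hcon
      -- j - 2 c j > C; take k = c j + 1
      have hck : c j < j := by
        by_contra h
        have := hcle j
        have : c j = j := by omega
        omega
      set k := c j + 1 with hk
      have hkn : k ≤ n := by omega
      have := h4 k j (by omega) hkn (by push_cast [hk]; omega) hjn
      rw [key j hjn k hkn] at this
      omega
    · by_contra hcon
      push_neg at hcon
      -- 2 c j - j > C; take k = c j
      set k := c j with hk
      have hkj : k ≤ j := hcle j
      have hk1 : 1 ≤ k := by
        rcases Nat.eq_zero_or_pos k with h0 | h; · omega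
        exact h
      have := h5 k j hk1 (by omega) (by omega) hjn
      have ht := (key j hjn k (by omega)).2 hk.le
      simp [this] at ht
end
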